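/- arXiv:2505.22518 — 5 statements merged into one kernel-verified Lean document; each statement's English description precedes it below -/
import Mathlib

section
/- Let θ ≥ 1 be real. Then Σ_{n=0}^{∞} (−1)^n / ((2θ + n)(2θ + n + 1)) = ψ(θ + 1/2) − ψ(θ) − 1/(2θ), where ψ denotes the digamma function. -/
open Real Filter Finset Topology

/-- The digamma function `ψ`, the derivative of `x ↦ log Γ(x)` (real Gamma). -/
noncomputable def digamma (x : ℝ) : ℝ := deriv (fun y : ℝ => Real.log (Real.Gamma y)) x

private lemma summable_inv_sq : Summable (fun n : ℕ => (((n : ℝ) + 1) ^ 2)⁻¹) := by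
  have h := (summable_nat_add_iff (f := fun n : ℕ => 1 / ((n : ℝ)) ^ 2) 1).mpr
    (Real.summable_one_div_nat_pow.mpr one_lt_two)
  refine h.congr fun n => ?_
  push_cast
  rw [one_div]

private lemma summable_of_bound {f : ℕ → ℝ} (h : ∀ n, |f n| ≤ (((n : ℝ) + 1) ^ 2)⁻¹) :
    Summable f :=
  Summable.of_norm_bounded summable_inv_sq h

private lemma hasDerivAt_logGammaSeq (n : ℕ) {x : ℝ} (hx : 0 < x) :
    HasDerivAt (fun y => Real.BohrMollerup.logGammaSeq y n)
      (Real.log n - ∑ m ∈ Finset.range (n + 1), (x + m)⁻¹) x := by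
  have h1 : HasDerivAt (fun y : ℝ => y * Real.log n + Real.log (Nat.factorial n))
      (Real.log n) x := by
    simpa using ((hasDerivAt_id x).mul_const (Real.log n)).add_const (Real.log (Nat.factorial n))
  have h2 : HasDerivAt (fun y : ℝ => ∑ m ∈ Finset.range (n + 1), Real.log (y + m))
      (∑ m ∈ Finset.range (n + 1), (x + m)⁻¹) x := by
    refine HasDerivAt.fun_sum fun m _ => ?_
    have hne : x + (m : ℝ) ≠ 0 := by positivity
    have := (Real.hasDerivAt_log hne).comp x ((hasDerivAt_id x).add_const (m : ℝ))
    simpa [Function.comp_def] using this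
  have := h1.fun_sub h2
  simpa [Real.BohrMollerup.logGammaSeq] using this

set_option maxHeartbeats 1000000 in
private lemma digamma_diff (θ : ℝ) (hθ : 1 ≤ θ) :
    digamma (θ + 1 / 2) - digamma θ = ∑' m : ℕ, ((θ + m)⁻¹ - (θ + m + 1 / 2)⁻¹) := by
  set s : Set ℝ := Set.Ioi (1 / 2 : ℝ) with hs
  have hθs : θ ∈ s := Set.mem_Ioi.mpr (by linarith)
  set F : ℕ → ℝ → ℝ := fun n x =>
    Real.BohrMollerup.logGammaSeq (x + 1 / 2) n - Real.BohrMollerup.logGammaSeq x n with hF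
  set F' : ℕ → ℝ → ℝ := fun n x =>
    ∑ m ∈ Finset.range (n + 1), ((x + m)⁻¹ - (x + m + 1 / 2)⁻¹) with hF'
  set g : ℝ → ℝ := fun x => Real.log (Real.Gamma (x + 1 / 2)) - Real.log (Real.Gamma x) with hg
  set g' : ℝ → ℝ := fun x => ∑' m : ℕ, ((x + m)⁻¹ - (x + m + 1 / 2)⁻¹) with hg'
  have hxpos : ∀ x ∈ s, (0 : ℝ) < x := fun x hx => lt_trans (by norm_num) hx
  -- each F n is differentiable with derivative F' n
  have hderiv : ∀ n : ℕ, ∀ x ∈ s, HasDerivAt (F n) (F' n x) x := by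
    intro n x hx
    have hx0 : 0 < x := hxpos x hx
    have hx1 : 0 < x + 1 / 2 := by linarith
    have h1 := (hasDerivAt_logGammaSeq n hx1).comp x ((hasDerivAt_id x).add_const (1 / 2 : ℝ))
    have h2 := hasDerivAt_logGammaSeq n hx0
    have h3 := h1.sub h2
    have key : (Real.log n - ∑ m ∈ Finset.range (n + 1), (x + 1 / 2 + m)⁻¹) * 1 -
        (Real.log n - ∑ m ∈ Finset.range (n + 1), (x + m)⁻¹)
        = ∑ m ∈ Finset.range (n + 1), ((x + m)⁻¹ - (x + m + 1 / 2)⁻¹) := by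
      rw [Finset.sum_sub_distrib]
      have h4 : ∑ m ∈ Finset.range (n + 1), (x + 1 / 2 + (m : ℝ))⁻¹
          = ∑ m ∈ Finset.range (n + 1), (x + m + 1 / 2)⁻¹ :=
        Finset.sum_congr rfl fun m _ => by ring_nf
      rw [h4]; ring
    rw [key] at h3
    exact h3
  -- locally uniform convergence of derivatives
  have hunif : TendstoLocallyUniformlyOn F' g' atTop s := by
    have hbound : ∀ (m : ℕ), ∀ x ∈ s, ‖(x + (m : ℝ))⁻¹ - (x + m + 1 / 2)⁻¹‖ ≤
        (((m : ℝ) + 1) ^ 2)⁻¹ := by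
      intro m x hx
      have hx2 : (1 / 2 : ℝ) < x := hx
      have hm : (0 : ℝ) ≤ (m : ℝ) := Nat.cast_nonneg m
      have h1 : (0 : ℝ) < x + m := by linarith
      have h2 : (0 : ℝ) < x + m + 1 / 2 := by linarith
      have key : (x + (m : ℝ))⁻¹ - (x + m + 1 / 2)⁻¹ =
          (1 / 2) * ((x + m) * (x + m + 1 / 2))⁻¹ := by
        field_simp [h1.ne', h2.ne']
        try ring
      have hnonneg : (0 : ℝ) ≤ (x + (m : ℝ))⁻¹ - (x + m + 1 / 2)⁻¹ := by
        rw [key]; positivity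
      rw [Real.norm_eq_abs, abs_of_nonneg hnonneg, key]
      have hge : ((m : ℝ) + 1) ^ 2 / 2 ≤ (x + m) * (x + m + 1 / 2) := by nlinarith
      have hpos : (0 : ℝ) < ((m : ℝ) + 1) ^ 2 / 2 := by positivity
      have hinv := inv_anti₀ hpos hge
      calc (1 / 2 : ℝ) * ((x + m) * (x + m + 1 / 2))⁻¹
          ≤ (1 / 2) * (((m : ℝ) + 1) ^ 2 / 2)⁻¹ :=
            mul_le_mul_of_nonneg_left hinv (by norm_num)
        _ = (((m : ℝ) + 1) ^ 2)⁻¹ := by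
            rw [inv_div]
            ring
    have h := tendstoUniformlyOn_tsum_nat summable_inv_sq (s := s)
      (f := fun m x => (x + (m : ℝ))⁻¹ - (x + m + 1 / 2)⁻¹) hbound
    have hshift : TendstoUniformlyOn F' g' atTop s := fun u hu =>
      (tendsto_add_atTop_nat 1).eventually (h u hu)
    exact hshift.tendstoLocallyUniformlyOn
  -- pointwise convergence of F to g
  have hfg : ∀ x ∈ s, Tendsto (fun n => F n x) atTop (𝓝 (g x)) := by
    intro x hx
    have hx0 : 0 < x := hxpos x hx
    have hx1 : 0 < x + 1 / 2 := by linarith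
    exact (Real.BohrMollerup.tendsto_log_gamma hx1).sub (Real.BohrMollerup.tendsto_log_gamma hx0)
  have hD : HasDerivAt g (g' θ) θ :=
    hasDerivAt_of_tendstoLocallyUniformlyOn isOpen_Ioi hunif
      (Filter.Eventually.of_forall hderiv) hfg hθs
  -- On the other hand, g has derivative digamma (θ+1/2) - digamma θ at θ
  have hθ0 : (0 : ℝ) < θ := by linarith
  have hθ1 : (0 : ℝ) < θ + 1 / 2 := by linarith
  have hdiffΓ : ∀ {x : ℝ}, 0 < x →
      DifferentiableAt ℝ (fun y : ℝ => Real.log (Real.Gamma y)) x := by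
    intro x hx
    refine (Real.differentiableAt_Gamma fun m => ?_).log (Real.Gamma_pos_of_pos hx).ne'
    have hm : (0 : ℝ) ≤ (m : ℝ) := Nat.cast_nonneg m
    intro hcon
    rw [hcon] at hx
    linarith
  have hd1 := (hdiffΓ hθ1).hasDerivAt
  have hd2 := (hdiffΓ hθ0).hasDerivAt
  have hc1 : HasDerivAt (fun y : ℝ => Real.log (Real.Gamma (y + 1 / 2)))
      (digamma (θ + 1 / 2)) θ := by
    have := hd1.comp θ ((hasDerivAt_id θ).add_const (1 / 2 : ℝ))
    simpa [digamma, Function.comp_def] using this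
  have hE : HasDerivAt g (digamma (θ + 1 / 2) - digamma θ) θ := by
    have := hc1.fun_sub hd2
    simpa [hg, digamma] using this
  exact hE.unique hD

set_option maxHeartbeats 1000000 in
/-- For real `θ ≥ 1`,
`Σ_{n=0}^∞ (−1)^n/((2θ+n)(2θ+n+1)) = ψ(θ + 1/2) − ψ(θ) − 1/(2θ)`. -/
theorem stmt_6 (θ : ℝ) (hθ : 1 ≤ θ) :
    Summable (fun n : ℕ => (-1 : ℝ) ^ n / ((2 * θ + n) * (2 * θ + n + 1))) ∧
    ∑' n : ℕ, (-1 : ℝ) ^ n / ((2 * θ + n) * (2 * θ + n + 1)) =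
      digamma (θ + 1 / 2) - digamma θ - 1 / (2 * θ) := by
  have hθ0 : (0 : ℝ) < θ := by linarith
  set a : ℕ → ℝ := fun n => (2 * θ + n)⁻¹ with ha
  have hapos : ∀ n : ℕ, (0 : ℝ) < 2 * θ + n := by
    intro n; have : (0 : ℝ) ≤ (n : ℝ) := Nat.cast_nonneg n; linarith
  set t : ℕ → ℝ := fun n => (-1 : ℝ) ^ n / ((2 * θ + n) * (2 * θ + n + 1)) with ht
  -- t n = (-1)^n * (a n - a (n+1))
  have hteq : ∀ n : ℕ, t n = (-1 : ℝ) ^ n * (a n - a (n + 1)) := by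
    intro n
    have h1 := hapos n
    have h2 : (0 : ℝ) < 2 * θ + n + 1 := by linarith
    simp only [ht, ha]
    push_cast
    rw [show (2 * θ + ((n : ℝ) + 1)) = 2 * θ + n + 1 from by ring]
    field_simp [h1.ne', h2.ne']
    try ring
  -- summability
  have htsummable : Summable t := by
    refine summable_of_bound fun n => ?_
    have h1 := hapos n
    have h2 : (0 : ℝ) < 2 * θ + n + 1 := by linarith
    have hn : (0 : ℝ) ≤ (n : ℝ) := Nat.cast_nonneg n
    simp only [ht]
    rw [abs_div, abs_pow, abs_neg, abs_one, one_pow, one_div,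
      abs_of_pos (by positivity : (0:ℝ) < (2 * θ + n) * (2 * θ + n + 1))]
    have hge : ((n : ℝ) + 1) ^ 2 ≤ (2 * θ + n) * (2 * θ + n + 1) := by nlinarith
    exact inv_anti₀ (by positivity) hge
  refine ⟨htsummable, ?_⟩
  -- even and odd parts
  have hinj2 : Function.Injective (fun k : ℕ => 2 * k) := by
    intro x y h; dsimp only at h; omega
  have hinj21 : Function.Injective (fun k : ℕ => 2 * k + 1) := by
    intro x y h; dsimp only at h; omega
  have hsE : Summable fun k => t (2 * k) := htsummable.comp_injective hinj2
  have hsO : Summable fun k => t (2 * k + 1) := htsummable.comp_injective hinj21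
  have hEO := tsum_even_add_odd hsE hsO
  have hpowE : ∀ k : ℕ, (-1 : ℝ) ^ (2 * k) = 1 := fun k => by rw [pow_mul]; norm_num
  have hpowO : ∀ k : ℕ, (-1 : ℝ) ^ (2 * k + 1) = -1 := fun k => by
    rw [pow_succ, pow_mul]; norm_num
  have hEterm : ∀ k : ℕ, t (2 * k) = a (2 * k) - a (2 * k + 1) := fun k => by
    rw [hteq, hpowE, one_mul]
  have hOterm : ∀ k : ℕ, t (2 * k + 1) = a (2 * k + 2) - a (2 * k + 1) := fun k => by
    rw [hteq, hpowO, show 2 * k + 1 + 1 = 2 * k + 2 from by omega]; ring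
  -- telescoping summability
  have htelsummable : Summable fun k : ℕ => a (2 * k) - a (2 * k + 2) := by
    refine summable_of_bound fun k => ?_
    have h1 := hapos (2 * k)
    have h2 := hapos (2 * k + 2)
    have hk : (0 : ℝ) ≤ (k : ℝ) := Nat.cast_nonneg k
    simp only [ha]
    push_cast
    have e1 : (0 : ℝ) < 2 * θ + 2 * k := by linarith
    have e2 : (0 : ℝ) < 2 * θ + (2 * k + 2) := by linarith
    have key : (2 * θ + 2 * (k : ℝ))⁻¹ - (2 * θ + (2 * (k : ℝ) + 2))⁻¹ =
        2 * ((2 * θ + 2 * k) * (2 * θ + (2 * k + 2)))⁻¹ := by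
      field_simp [e1.ne', e2.ne']
      try ring
    have hnn : (0 : ℝ) ≤ (2 * θ + 2 * (k : ℝ))⁻¹ - (2 * θ + (2 * (k : ℝ) + 2))⁻¹ := by
      rw [key]; positivity
    rw [abs_of_nonneg hnn, key]
    have hge : 2 * (((k : ℝ) + 1) ^ 2) ≤ (2 * θ + 2 * k) * (2 * θ + (2 * k + 2)) := by nlinarith
    calc 2 * ((2 * θ + 2 * (k : ℝ)) * (2 * θ + (2 * (k : ℝ) + 2)))⁻¹
        ≤ 2 * (2 * (((k : ℝ) + 1) ^ 2))⁻¹ :=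
          mul_le_mul_of_nonneg_left (inv_anti₀ (by positivity) hge) (by norm_num)
      _ = (((k : ℝ) + 1) ^ 2)⁻¹ := by
          rw [mul_inv]
          ring
  have htendsa : Tendsto (fun k : ℕ => a (2 * k)) atTop (𝓝 0) := by
    have h2k : Tendsto (fun k : ℕ => 2 * k) atTop atTop :=
      tendsto_atTop_mono (fun k => by dsimp; omega) tendsto_id
    have hmain : Tendsto (fun k : ℕ => 2 * θ + ((2 * k : ℕ) : ℝ)) atTop atTop :=
      tendsto_atTop_add_const_left _ _ (tendsto_natCast_atTop_atTop.comp h2k)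
    exact hmain.inv_tendsto_atTop
  have htel : HasSum (fun k : ℕ => a (2 * k) - a (2 * k + 2)) (a 0) := by
    rw [htelsummable.hasSum_iff_tendsto_nat]
    have hrw : ∀ n : ℕ, ∑ i ∈ Finset.range n, (a (2 * i) - a (2 * i + 2)) =
        a 0 - a (2 * n) := by
      intro n
      calc ∑ i ∈ Finset.range n, (a (2 * i) - a (2 * i + 2))
          = ∑ i ∈ Finset.range n, (a (2 * i) - a (2 * (i + 1))) :=
            Finset.sum_congr rfl fun i _ => by
              rw [show 2 * (i + 1) = 2 * i + 2 from by ring]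
        _ = a (2 * 0) - a (2 * n) := Finset.sum_range_sub' (fun j => a (2 * j)) n
        _ = a 0 - a (2 * n) := by norm_num
    simp only [hrw]
    simpa using tendsto_const_nhds.sub htendsa
  have hsE' : Summable fun k : ℕ => a (2 * k) - a (2 * k + 1) :=
    (summable_congr hEterm).mp hsE
  have hOsplit : ∀ k : ℕ, t (2 * k + 1) =
      (a (2 * k) - a (2 * k + 1)) - (a (2 * k) - a (2 * k + 2)) := by
    intro k; rw [hOterm]; ring
  have hOsum : ∑' k, t (2 * k + 1) =
      (∑' k, (a (2 * k) - a (2 * k + 1))) - a 0 := by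
    rw [tsum_congr hOsplit, Summable.tsum_sub hsE' htelsummable, htel.tsum_eq]
  have hEsum : ∑' k, t (2 * k) = ∑' k, (a (2 * k) - a (2 * k + 1)) :=
    tsum_congr hEterm
  -- the digamma series
  have hGsum : ∑' m : ℕ, ((θ + m)⁻¹ - (θ + m + 1 / 2)⁻¹) =
      2 * ∑' k, (a (2 * k) - a (2 * k + 1)) := by
    rw [← tsum_mul_left]
    refine tsum_congr fun m => ?_
    have hm : (0 : ℝ) ≤ (m : ℝ) := Nat.cast_nonneg m
    simp only [ha]
    push_cast
    have e1 : (0 : ℝ) < θ + m := by linarith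
    have e2 : (0 : ℝ) < θ + m + 1 / 2 := by linarith
    have e3 : (0 : ℝ) < 2 * θ + 2 * (m : ℝ) := by linarith
    have e4 : (0 : ℝ) < 2 * θ + (2 * (m : ℝ) + 1) := by linarith
    field_simp [e1.ne', e2.ne', e3.ne', e4.ne']
    try ring
  rw [digamma_diff θ hθ, hGsum]
  have hfinal : ∑' n, t n = 2 * (∑' k, (a (2 * k) - a (2 * k + 1))) - a 0 := by
    rw [← hEO, hEsum, hOsum]; ring
  have ha0 : a 0 = 1 / (2 * θ) := by simp only [ha]; norm_num
  rw [hfinal, ha0]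
end

section
/- Let θ ≥ 1 be real. Then Kendall's τ for the A1 copula satisfies 1 + 4·∫₀¹ t·(t^{1/θ} − 1)/(1 + t^{1/θ}) dt = 3 + 4θ·(ψ(θ) − ψ(θ + 1/2)), where ψ denotes the digamma function. -/
lemma diffAt_logGamma {x : ℝ} (hx : 0 < x) :
    DifferentiableAt ℝ (fun y : ℝ => Real.log (Real.Gamma y)) x := by
  have h := Real.differentiableAt_Gamma (s := x) (fun m => by
    intro h; rw [h] at hx; have : (0:ℝ) ≤ m := Nat.cast_nonneg m; linarith)
  exact h.log (Real.Gamma_pos_of_pos hx).ne'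

lemma hasDerivAt_logGamma {x : ℝ} (hx : 0 < x) :
    HasDerivAt (fun y : ℝ => Real.log (Real.Gamma y)) (digamma x) x :=
  (diffAt_logGamma hx).hasDerivAt

lemma digamma_add_one {x : ℝ} (hx : 0 < x) : digamma (x + 1) = digamma x + 1 / x := by
  have h1 : HasDerivAt (fun y : ℝ => Real.log (Real.Gamma (y + 1))) (digamma (x + 1)) x := by
    have h := (hasDerivAt_logGamma (by linarith : (0:ℝ) < x + 1)).comp x
      ((hasDerivAt_id x).add_const 1)
    rw [mul_one] at h; exact h
  have h2 : HasDerivAt (fun y : ℝ => Real.log y + Real.log (Real.Gamma y))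
      (digamma x + 1 / x) x := by
    have h := (Real.hasDerivAt_log hx.ne').add (hasDerivAt_logGamma hx)
    rw [add_comm x⁻¹ (digamma x), ← one_div] at h; exact h
  have heq : (fun y : ℝ => Real.log (Real.Gamma (y + 1))) =ᶠ[nhds x]
      (fun y : ℝ => Real.log y + Real.log (Real.Gamma y)) := by
    filter_upwards [eventually_gt_nhds hx] with y hy
    rw [Real.Gamma_add_one hy.ne', Real.log_mul hy.ne' (Real.Gamma_pos_of_pos hy).ne']
  have h3 := h1.congr_of_eventuallyEq heq.symm
  exact h3.unique h2

lemma digamma_mono {x y : ℝ} (hx : 0 < x) (hxy : x ≤ y) : digamma x ≤ digamma y := by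
  have := Real.convexOn_log_Gamma.monotoneOn_deriv (fun z hz => diffAt_logGamma hz)
  exact this (Set.mem_Ioi.2 hx) (Set.mem_Ioi.2 (lt_of_lt_of_le hx hxy)) hxy

lemma digamma_add_nat {x : ℝ} (hx : 0 < x) (n : ℕ) :
    digamma (x + n) = digamma x + ∑ k ∈ Finset.range n, 1 / (x + k) := by
  induction n with
  | zero => simp
  | succ n ih =>
    have hxn : 0 < x + n := by positivity
    have h : (x + (↑(n+1)):ℝ) = (x + n) + 1 := by push_cast; ring
    rw [h, digamma_add_one hxn, ih, Finset.sum_range_succ]; ring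

lemma tendsto_one_div_add_nat (x : ℝ) :
    Filter.Tendsto (fun n : ℕ => 1 / (x + n)) Filter.atTop (nhds 0) := by
  have h := tendsto_inv_atTop_zero.comp
    (Filter.tendsto_atTop_add_const_left Filter.atTop x
      (tendsto_natCast_atTop_atTop (R := ℝ)))
  exact h.congr fun n => by simp [one_div, Function.comp]

lemma hasSum_digamma_diff {x : ℝ} (hx : 0 < x) :
    HasSum (fun k : ℕ => 1 / (x + k) - 1 / (x + k + 1/2))
      (digamma (x + 1/2) - digamma x) := by
  have hx2 : 0 < x + 1/2 := by linarith
  rw [hasSum_iff_tendsto_nat_of_nonneg]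
  · have key : ∀ n : ℕ, ∑ k ∈ Finset.range n, (1 / (x + k) - 1 / (x + k + 1/2))
        = (digamma (x+1/2) - digamma x) + (digamma (x + n) - digamma (x + 1/2 + n)) := by
      intro n
      have h1 := digamma_add_nat hx n
      have h2 := digamma_add_nat hx2 n
      have hs : ∑ k ∈ Finset.range n, (1 / (x + k) - 1 / (x + k + 1/2))
          = (∑ k ∈ Finset.range n, 1 / (x + k)) - ∑ k ∈ Finset.range n, 1 / (x + 1/2 + k) := by
        rw [← Finset.sum_sub_distrib]
        exact Finset.sum_congr rfl fun k _ => by ring_nf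
      rw [hs, h1, h2]; ring
    have hlim : Filter.Tendsto (fun n : ℕ => digamma (x + n) - digamma (x + 1/2 + n))
        Filter.atTop (nhds 0) := by
      have hub : ∀ n : ℕ, digamma (x + n) - digamma (x + 1/2 + n) ≤ 0 := by
        intro n
        have : digamma (x + n) ≤ digamma (x + 1/2 + n) :=
          digamma_mono (by positivity) (by linarith)
        linarith
      have hlb : ∀ n : ℕ, -(1 / (x + n)) ≤ digamma (x + n) - digamma (x + 1/2 + n) := by
        intro n
        have hxn : 0 < x + n := by positivity
        have h1 : digamma (x + 1/2 + n) ≤ digamma (x + n + 1) :=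
          digamma_mono (by linarith) (by linarith)
        have h2 : digamma (x + n + 1) = digamma (x + n) + 1 / (x + n) :=
          digamma_add_one hxn
        linarith
      have hz : Filter.Tendsto (fun n : ℕ => -(1 / (x + n))) Filter.atTop (nhds 0) := by
        simpa using (tendsto_one_div_add_nat x).neg
      exact tendsto_of_tendsto_of_tendsto_of_le_of_le hz tendsto_const_nhds hlb hub
    rw [show (digamma (x+1/2) - digamma x) = (digamma (x+1/2) - digamma x) + 0 by ring]
    exact ((tendsto_const_nhds.add hlim)).congr (fun n => (key n).symm)
  · intro k
    have h1 : (0:ℝ) < x + k := by positivity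
    have : 1 / (x + k + 1/2) ≤ 1 / (x + k) :=
      one_div_le_one_div_of_le h1 (by linarith)
    linarith

lemma hasSum_telescope {θ : ℝ} (hθ : 0 < θ) :
    HasSum (fun k : ℕ => θ / (2*θ + 2*k) - θ / (2*θ + 2*k + 2)) (1/2) := by
  rw [hasSum_iff_tendsto_nat_of_nonneg]
  · have key : ∀ n : ℕ, ∑ k ∈ Finset.range n,
        (θ / (2*θ + 2*k) - θ / (2*θ + 2*k + 2)) = θ / (2*θ) - θ / (2*θ + 2*n) := by
      intro n
      have e : ∀ k : ℕ, θ / (2*θ + 2*(k:ℝ)) - θ / (2*θ + 2*(k:ℝ) + 2)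
          = (fun j : ℕ => θ / (2*θ + 2*(j:ℝ))) k - (fun j : ℕ => θ / (2*θ + 2*(j:ℝ))) (k+1) := by
        intro k; push_cast; ring_nf
      rw [Finset.sum_congr rfl (fun k _ => e k), Finset.sum_range_sub']
      norm_num
    have h2 : Filter.Tendsto (fun n : ℕ => θ / (2*θ) - θ / (2*θ + 2*n))
        Filter.atTop (nhds (1/2)) := by
      have hz : Filter.Tendsto (fun n : ℕ => θ / (2*θ + 2*n)) Filter.atTop (nhds 0) := by
        apply Filter.Tendsto.div_atTop (tendsto_const_nhds (x := θ))
        apply Filter.tendsto_atTop_add_const_left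
        exact (tendsto_natCast_atTop_atTop (R := ℝ)).const_mul_atTop (by norm_num)
      have : θ / (2*θ) = 1/2 := by field_simp
      rw [show (1/2 : ℝ) = 1/2 - 0 by ring]
      exact (tendsto_const_nhds.sub hz).congr fun n => by rw [this]
    exact h2.congr fun n => (key n).symm
  · intro k
    have h1 : (0:ℝ) < 2*θ + 2*k := by positivity
    have : θ / (2*θ + 2*k + 2) ≤ θ / (2*θ + 2*k) :=
      div_le_div_of_nonneg_left hθ.le h1 (by linarith)
    linarith

/-- the coefficient `c k` -/
noncomputable def cfn (θ : ℝ) (k : ℕ) : ℝ :=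
  θ / (2*θ + 2*k) - 2*θ / (2*θ + 2*k + 1) + θ / (2*θ + 2*k + 2)

lemma hasSum_cfn {θ : ℝ} (hθ : 0 < θ) :
    HasSum (cfn θ) (θ * (digamma (θ + 1/2) - digamma θ) - 1/2) := by
  have h1 := (hasSum_digamma_diff hθ).mul_left θ
  have h2 := hasSum_telescope hθ
  have h3 := h1.sub h2
  refine h3.congr_fun fun k => ?_
  unfold cfn
  have d1 : (0:ℝ) < θ + k := by positivity
  have d2 : (0:ℝ) < θ + k + 1/2 := by linarith
  have d3 : (0:ℝ) < 2*θ + 2*k := by positivity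
  have d4 : (0:ℝ) < 2*θ + 2*k + 1 := by linarith
  have d5 : (0:ℝ) < 2*θ + 2*k + 2 := by linarith
  field_simp
  ring

noncomputable def gfn (θ : ℝ) (k : ℕ) (t : ℝ) : ℝ :=
  t * (1 - t ^ (1/θ))^2 * ((t ^ (1/θ))^2)^k

lemma hasSum_gfn {θ : ℝ} (hθ : 1 ≤ θ) {t : ℝ} (ht : t ∈ Set.Ioc (0:ℝ) 1) :
    HasSum (fun k : ℕ => -(gfn θ k t)) (t * (t ^ (1/θ) - 1) / (1 + t ^ (1/θ))) := by
  have hθ0 : (0:ℝ) < θ := by linarith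
  set u := t ^ (1/θ) with hu
  have hu0 : 0 < u := Real.rpow_pos_of_pos ht.1 _
  have hu1 : u ≤ 1 := Real.rpow_le_one ht.1.le ht.2 (by positivity)
  rcases eq_or_lt_of_le hu1 with h1 | h1
  · have hz : ∀ k : ℕ, -(gfn θ k t) = 0 := by
      intro k; unfold gfn; rw [← hu, h1]; ring
    rw [show t * (u - 1) / (1 + u) = 0 by rw [h1]; ring]
    exact hasSum_zero.congr_fun fun k => hz k
  · have hsq : u^2 < 1 := by nlinarith
    have hg := hasSum_geometric_of_lt_one (by positivity : (0:ℝ) ≤ u^2) hsq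
    have h2 : HasSum (fun k : ℕ => -(gfn θ k t)) (-(t * (1 - u)^2) * (1 - u^2)⁻¹) :=
      (hg.mul_left (-(t * (1 - u)^2))).congr_fun fun k => by
        unfold gfn; rw [← hu]; ring
    have heq : -(t * (1 - u)^2) * (1 - u^2)⁻¹ = t * (u - 1) / (1 + u) := by
      have hne1 : (1:ℝ) - u^2 ≠ 0 := by nlinarith
      have hne2 : (1:ℝ) + u ≠ 0 := by linarith
      field_simp
      ring
    rw [← heq]
    exact h2

lemma integral_gfn {θ : ℝ} (hθ : 1 ≤ θ) (k : ℕ) :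
    ∫ t in (0:ℝ)..1, gfn θ k t = cfn θ k := by
  have hθ0 : (0:ℝ) < θ := by linarith
  set a := 1/θ with ha
  have ha0 : 0 < a := by positivity
  have hk : (0:ℝ) ≤ (k:ℝ) := Nat.cast_nonneg k
  have hexp : Set.EqOn (gfn θ k)
      (fun t => t ^ (1 + a*(2*(k:ℝ))) - 2 * t ^ (1 + a*(2*(k:ℝ)+1)) + t ^ (1 + a*(2*(k:ℝ)+2)))
      (Set.uIcc (0:ℝ) 1) := by
    intro t ht
    rw [Set.uIcc_of_le (by norm_num : (0:ℝ) ≤ 1)] at ht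
    show gfn θ k t
        = t ^ (1 + a*(2*(k:ℝ))) - 2 * t ^ (1 + a*(2*(k:ℝ)+1)) + t ^ (1 + a*(2*(k:ℝ)+2))
    rcases eq_or_lt_of_le ht.1 with rfl | ht0
    · have z : ∀ b : ℝ, 0 < b → (0:ℝ) ^ b = 0 := fun b hb => Real.zero_rpow (ne_of_gt hb)
      rw [z _ (by nlinarith : (0:ℝ) < 1 + a*(2*(k:ℝ))),
          z _ (by nlinarith : (0:ℝ) < 1 + a*(2*(k:ℝ)+1)),
          z _ (by nlinarith : (0:ℝ) < 1 + a*(2*(k:ℝ)+2))]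
      unfold gfn
      rw [z _ ha0]
      ring
    · have e : ∀ m : ℕ, t ^ (1 + a*(m:ℝ)) = t * (t^a)^m := by
        intro m
        rw [Real.rpow_add ht0, Real.rpow_one, ← Real.rpow_natCast (t^a) m,
            ← Real.rpow_mul ht0.le]
      rw [show (1 + a*(2*(k:ℝ))) = 1 + a*(((2*k : ℕ)):ℝ) by push_cast; ring,
          show (1 + a*(2*(k:ℝ)+1)) = 1 + a*(((2*k+1 : ℕ)):ℝ) by push_cast; ring,
          show (1 + a*(2*(k:ℝ)+2)) = 1 + a*(((2*k+2 : ℕ)):ℝ) by push_cast; ring,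
          e, e, e]
      unfold gfn
      ring
  rw [intervalIntegral.integral_congr hexp]
  have i1 : ∀ p : ℝ, 0 < p → ∫ t in (0:ℝ)..1, t ^ p = 1/(p+1) := by
    intro p hp
    rw [integral_rpow (Or.inl (by linarith))]
    rw [Real.one_rpow, Real.zero_rpow (by positivity : p + 1 ≠ 0)]
    norm_num
  have int1 : IntervalIntegrable (fun t : ℝ => t ^ (1 + a*(2*(k:ℝ)))) MeasureTheory.volume 0 1 :=
    intervalIntegral.intervalIntegrable_rpow' (by nlinarith)
  have int2 : IntervalIntegrable (fun t : ℝ => t ^ (1 + a*(2*(k:ℝ)+1))) MeasureTheory.volume 0 1 :=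
    intervalIntegral.intervalIntegrable_rpow' (by nlinarith)
  have int3 : IntervalIntegrable (fun t : ℝ => t ^ (1 + a*(2*(k:ℝ)+2))) MeasureTheory.volume 0 1 :=
    intervalIntegral.intervalIntegrable_rpow' (by nlinarith)
  rw [intervalIntegral.integral_add (int1.sub (int2.const_mul 2)) int3,
      intervalIntegral.integral_sub int1 (int2.const_mul 2),
      intervalIntegral.integral_const_mul]
  rw [i1 _ (by nlinarith), i1 _ (by nlinarith), i1 _ (by nlinarith)]
  unfold cfn
  rw [ha]
  have d3 : (0:ℝ) < 2*θ + 2*k := by positivity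
  have d4 : (0:ℝ) < 2*θ + 2*k + 1 := by linarith
  have d5 : (0:ℝ) < 2*θ + 2*k + 2 := by linarith
  field_simp
  ring

lemma continuous_gfn {θ : ℝ} (hθ : 1 ≤ θ) (k : ℕ) : Continuous (gfn θ k) := by
  have hθ0 : (0:ℝ) < θ := by linarith
  have h : Continuous (fun t : ℝ => t ^ (1/θ)) :=
    Real.continuous_rpow_const (one_div_pos.mpr hθ0).le
  unfold gfn
  fun_prop

lemma integral_main {θ : ℝ} (hθ : 1 ≤ θ) :
    ∫ t in (0:ℝ)..1, t * (t ^ (1 / θ) - 1) / (1 + t ^ (1 / θ))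
      = 1/2 - θ * (digamma (θ + 1/2) - digamma θ) := by
  have hθ0 : (0:ℝ) < θ := by linarith
  have hS := hasSum_cfn hθ0
  have hg_nonneg : ∀ k : ℕ, ∀ t ∈ Set.Ioc (0:ℝ) 1, 0 ≤ gfn θ k t := by
    intro k t ht
    unfold gfn
    exact mul_nonneg (mul_nonneg ht.1.le (sq_nonneg _)) (pow_nonneg (sq_nonneg _) k)
  have hintOn : ∀ k : ℕ, MeasureTheory.IntegrableOn (gfn θ k) (Set.Ioc 0 1)
      MeasureTheory.volume := fun k =>
    ((continuous_gfn hθ k).integrableOn_Ioc)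
  have hIoc : ∀ k : ℕ, ∫ t in Set.Ioc (0:ℝ) 1, gfn θ k t = cfn θ k := by
    intro k
    rw [← intervalIntegral.integral_of_le (by norm_num : (0:ℝ) ≤ 1)]
    exact integral_gfn hθ k
  have hc_nonneg : ∀ k : ℕ, 0 ≤ cfn θ k := by
    intro k
    rw [← hIoc k]
    exact MeasureTheory.setIntegral_nonneg measurableSet_Ioc (hg_nonneg k)
  rw [intervalIntegral.integral_of_le (by norm_num : (0:ℝ) ≤ 1)]
  have step1 : ∫ t in Set.Ioc (0:ℝ) 1, t * (t ^ (1 / θ) - 1) / (1 + t ^ (1 / θ))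
      = ∫ t in Set.Ioc (0:ℝ) 1, ∑' k : ℕ, -(gfn θ k t) := by
    refine MeasureTheory.setIntegral_congr_fun measurableSet_Ioc fun t ht => ?_
    exact ((hasSum_gfn hθ ht).tsum_eq).symm
  rw [step1]
  have step2 : ∫ t in Set.Ioc (0:ℝ) 1, ∑' k : ℕ, -(gfn θ k t)
      = ∑' k : ℕ, ∫ t in Set.Ioc (0:ℝ) 1, -(gfn θ k t) := by
    refine MeasureTheory.integral_tsum (fun k => ?_) ?_
    · exact ((continuous_gfn hθ k).neg.aestronglyMeasurable).restrict
    · have hlint : ∀ k : ℕ, ∫⁻ t in Set.Ioc (0:ℝ) 1, ‖-(gfn θ k t)‖₊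
          ∂MeasureTheory.volume = ENNReal.ofReal (cfn θ k) := by
        intro k
        have e1 : ∫⁻ t in Set.Ioc (0:ℝ) 1, (‖-(gfn θ k t)‖₊ : ENNReal)
            = ∫⁻ t in Set.Ioc (0:ℝ) 1, ENNReal.ofReal (gfn θ k t) := by
          refine MeasureTheory.lintegral_congr_ae ?_
          filter_upwards [MeasureTheory.ae_restrict_mem measurableSet_Ioc] with t ht
          rw [nnnorm_neg, ← enorm_eq_nnnorm, Real.enorm_eq_ofReal (hg_nonneg k t ht)]
        rw [e1, ← MeasureTheory.ofReal_integral_eq_lintegral_ofReal (hintOn k)]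
        · rw [hIoc k]
        · filter_upwards [MeasureTheory.ae_restrict_mem measurableSet_Ioc] with t ht
          exact hg_nonneg k t ht
      have : ∑' k : ℕ, ∫⁻ t in Set.Ioc (0:ℝ) 1, ‖-(gfn θ k t)‖₊ ∂MeasureTheory.volume
          = ENNReal.ofReal (∑' k : ℕ, cfn θ k) := by
        rw [ENNReal.ofReal_tsum_of_nonneg hc_nonneg hS.summable]
        exact tsum_congr hlint
      rw [show (∑' i : ℕ, ∫⁻ a in Set.Ioc (0:ℝ) 1, ‖-gfn θ i a‖ₑ) = _ from this]
      exact ENNReal.ofReal_ne_top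
  rw [step2]
  have step3 : ∑' k : ℕ, ∫ t in Set.Ioc (0:ℝ) 1, -(gfn θ k t)
      = -(θ * (digamma (θ + 1/2) - digamma θ) - 1/2) := by
    rw [← hS.tsum_eq, ← tsum_neg]
    refine tsum_congr fun k => ?_
    rw [MeasureTheory.integral_neg, hIoc k]
  rw [step3]
  ring

/-- For real `θ ≥ 1`, Kendall's τ for the A1 copula satisfies
`1 + 4 ∫₀¹ t (t^{1/θ} − 1)/(1 + t^{1/θ}) dt = 3 + 4θ (ψ(θ) − ψ(θ + 1/2))`. -/
theorem stmt_7 (θ : ℝ) (hθ : 1 ≤ θ) :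
    1 + 4 * ∫ t in (0:ℝ)..1, t * (t ^ (1 / θ) - 1) / (1 + t ^ (1 / θ)) =
      3 + 4 * θ * (digamma θ - digamma (θ + 1 / 2)) := by
  rw [integral_main hθ]
  ring
end

section
/- Fix t ∈ (0,1). Then the function h(θ) = θ · log(t^{1/θ} + t^{-1/θ} − 2) is strictly decreasing in θ on [1, ∞). -/
/-- Key algebraic identity: for `t ∈ (0,1)` and `θ ≥ 1`,
`θ log(t^{1/θ} + t^{-1/θ} − 2) = −log t + 2θ log(1 − t^{1/θ})`. -/
lemma stmt_12_key (t : ℝ) (ht : t ∈ Set.Ioo (0 : ℝ) 1) (θ : ℝ) (hθ : 1 ≤ θ) :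
    θ * Real.log (t ^ (1 / θ) + t ^ (-(1 / θ)) - 2)
      = -Real.log t + 2 * θ * Real.log (1 - t ^ (1 / θ)) := by
  obtain ⟨ht0, ht1⟩ := ht
  have hθ0 : (0 : ℝ) < θ := lt_of_lt_of_le one_pos hθ
  have hs0 : (0 : ℝ) < 1 / θ := by positivity
  set x : ℝ := t ^ (1 / θ) with hxdef
  have hx0 : 0 < x := Real.rpow_pos_of_pos ht0 _
  have hx1 : x < 1 := Real.rpow_lt_one ht0.le ht1 hs0
  have hneg : t ^ (-(1 / θ)) = x⁻¹ := Real.rpow_neg ht0.le _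
  have hsum : x + x⁻¹ - 2 = x⁻¹ * (1 - x) ^ 2 := by
    field_simp
    ring
  have hlogx : Real.log x = (1 / θ) * Real.log t := Real.log_rpow ht0 _
  have h1x : 0 < 1 - x := by linarith
  rw [hneg, hsum, Real.log_mul (by positivity) (by positivity), Real.log_inv,
    Real.log_pow, hlogx]
  push_cast
  field_simp

/-- For fixed `t ∈ (0,1)`, the function `h(θ) = θ log(t^{1/θ} + t^{-1/θ} − 2)`
is strictly decreasing in `θ` on `[1, ∞)`. -/
theorem stmt_12 (t : ℝ) (ht : t ∈ Set.Ioo (0 : ℝ) 1) :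
    StrictAntiOn (fun θ : ℝ => θ * Real.log (t ^ (1 / θ) + t ^ (-(1 / θ)) - 2))
      (Set.Ici (1 : ℝ)) := by
  obtain ⟨ht0, ht1⟩ := ht
  intro a ha b hb hab
  simp only [Set.mem_Ici] at ha hb
  have ha0 : (0 : ℝ) < a := lt_of_lt_of_le one_pos ha
  have hb0 : (0 : ℝ) < b := lt_of_lt_of_le one_pos hb
  simp only
  rw [stmt_12_key t ⟨ht0, ht1⟩ a ha, stmt_12_key t ⟨ht0, ht1⟩ b hb]
  -- reduce to `b * log(1 − t^{1/b}) < a * log(1 − t^{1/a})`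
  have key : b * Real.log (1 - t ^ (1 / b)) < a * Real.log (1 - t ^ (1 / a)) := by
    set x : ℝ := t ^ (1 / a) with hxdef
    set r : ℝ := a / b with hrdef
    have hr0 : 0 < r := by positivity
    have hr1 : r < 1 := (div_lt_one hb0).mpr hab
    have hx0 : 0 < x := Real.rpow_pos_of_pos ht0 _
    have hx1 : x < 1 := Real.rpow_lt_one ht0.le ht1 (by positivity)
    have hrepr : t ^ (1 / b) = x ^ r := by
      rw [hxdef, ← Real.rpow_mul ht0.le]
      congr 1
      field_simp
      rw [hrdef, mul_comm, div_mul_cancel₀ _ hb0.ne']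
    have h1x : 0 < 1 - x := by linarith
    have h1 : x < x ^ r := by
      have := Real.rpow_lt_rpow_of_exponent_gt hx0 hx1 hr1
      simpa using this
    have h2 : 1 - x < (1 - x) ^ r := by
      have := Real.rpow_lt_rpow_of_exponent_gt h1x (by linarith) hr1
      simpa using this
    have hxr1 : x ^ r < 1 := Real.rpow_lt_one hx0.le hx1 hr0
    have hlt : Real.log (1 - x ^ r) < r * Real.log (1 - x) := by
      rw [← Real.log_rpow h1x]
      exact Real.log_lt_log (by linarith) (by linarith)
    have := mul_lt_mul_of_pos_left hlt hb0
    rw [hrepr]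
    calc b * Real.log (1 - x ^ r) < b * (r * Real.log (1 - x)) := this
      _ = a * Real.log (1 - x) := by
          rw [hrdef]; field_simp
  linarith
end

section
/- Let θ₁, θ₂ ≥ 1 be real. If (t^{1/θ₁} + t^{-1/θ₁} − 2)^{θ₁} = (t^{1/θ₂} + t^{-1/θ₂} − 2)^{θ₂} for all t ∈ (0,1), then θ₁ = θ₂. That is, the map θ ↦ φ_A1(·;θ) is injective on [1, ∞). -/
open Real Set

noncomputable def Gfun (θ : ℝ) : ℝ :=
  2 * θ * Real.log (Real.exp θ⁻¹ - Real.exp (-θ⁻¹))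

lemma E_pos {x : ℝ} (hx : 0 < x) : 0 < Real.exp x - Real.exp (-x) := by
  have := Real.exp_lt_exp.mpr (show -x < x by linarith)
  linarith

lemma Gderiv {θ : ℝ} (hθ : 0 < θ) :
    HasDerivAt Gfun
      (2 * Real.log (Real.exp θ⁻¹ - Real.exp (-θ⁻¹)) +
        2 * θ * ((Real.exp θ⁻¹ * (-(θ ^ 2)⁻¹) - Real.exp (-θ⁻¹) * (θ ^ 2)⁻¹) /
          (Real.exp θ⁻¹ - Real.exp (-θ⁻¹)))) θ := by
  have hθ0 : θ ≠ 0 := ne_of_gt hθ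
  have hinv : HasDerivAt (fun θ : ℝ => θ⁻¹) (-(θ ^ 2)⁻¹) θ := hasDerivAt_inv hθ0
  have ha : HasDerivAt (fun θ : ℝ => Real.exp θ⁻¹) (Real.exp θ⁻¹ * (-(θ ^ 2)⁻¹)) θ := hinv.exp
  have hnb : HasDerivAt (fun θ : ℝ => -θ⁻¹) ((θ ^ 2)⁻¹) θ := by
    have h' := hinv.neg; rw [neg_neg] at h'; exact h'
  have hb : HasDerivAt (fun θ : ℝ => Real.exp (-θ⁻¹)) (Real.exp (-θ⁻¹) * (θ ^ 2)⁻¹) θ := hnb.exp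
  have hE : HasDerivAt (fun θ : ℝ => Real.exp θ⁻¹ - Real.exp (-θ⁻¹))
      (Real.exp θ⁻¹ * (-(θ ^ 2)⁻¹) - Real.exp (-θ⁻¹) * (θ ^ 2)⁻¹) θ := ha.sub hb
  have hEpos : 0 < Real.exp θ⁻¹ - Real.exp (-θ⁻¹) := E_pos (inv_pos.mpr hθ)
  have hL : HasDerivAt (fun θ : ℝ => Real.log (Real.exp θ⁻¹ - Real.exp (-θ⁻¹)))
      ((Real.exp θ⁻¹ * (-(θ ^ 2)⁻¹) - Real.exp (-θ⁻¹) * (θ ^ 2)⁻¹) /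
        (Real.exp θ⁻¹ - Real.exp (-θ⁻¹))) θ := hE.log (ne_of_gt hEpos)
  have hc : HasDerivAt (fun θ : ℝ => 2 * θ) 2 θ := by
    simpa using (hasDerivAt_id θ).const_mul (2 : ℝ)
  exact hc.mul hL

lemma Gderiv_neg {θ : ℝ} (hθ : 1 ≤ θ) :
    (2 * Real.log (Real.exp θ⁻¹ - Real.exp (-θ⁻¹)) +
        2 * θ * ((Real.exp θ⁻¹ * (-(θ ^ 2)⁻¹) - Real.exp (-θ⁻¹) * (θ ^ 2)⁻¹) /
          (Real.exp θ⁻¹ - Real.exp (-θ⁻¹)))) < 0 := by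
  have hθ0 : 0 < θ := lt_of_lt_of_le one_pos hθ
  set x := θ⁻¹ with hx
  have hx0 : 0 < x := inv_pos.mpr hθ0
  have hEpos : 0 < Real.exp x - Real.exp (-x) := E_pos hx0
  have hlog : Real.log (Real.exp x - Real.exp (-x)) < x := by
    have hlt : Real.exp x - Real.exp (-x) < Real.exp x := by
      linarith [Real.exp_pos (-x)]
    calc Real.log (Real.exp x - Real.exp (-x)) < Real.log (Real.exp x) :=
          Real.log_lt_log hEpos hlt
      _ = x := Real.log_exp x
  have hS : Real.exp x - Real.exp (-x) < Real.exp x + Real.exp (-x) := by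
    have := Real.exp_pos (-x)
    linarith
  -- 2θ * ((-S * x²)/E) = -2x*S/E
  have hθsq : θ * (θ ^ 2)⁻¹ = x := by
    field_simp [hx]
    rw [hx, mul_inv_cancel₀ hθ0.ne']
  have key : 2 * θ * ((Real.exp x * (-(θ ^ 2)⁻¹) - Real.exp (-x) * (θ ^ 2)⁻¹) /
      (Real.exp x - Real.exp (-x)))
      = -(2 * x * ((Real.exp x + Real.exp (-x)) / (Real.exp x - Real.exp (-x)))) := by
    have hr : 2 * θ * ((Real.exp x * (-(θ ^ 2)⁻¹) - Real.exp (-x) * (θ ^ 2)⁻¹) /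
        (Real.exp x - Real.exp (-x)))
        = -(2 * (θ * (θ ^ 2)⁻¹) *
            ((Real.exp x + Real.exp (-x)) / (Real.exp x - Real.exp (-x)))) := by
      ring
    rw [hr, hθsq]
  rw [key]
  have hratio : 1 < (Real.exp x + Real.exp (-x)) / (Real.exp x - Real.exp (-x)) :=
    (one_lt_div hEpos).mpr hS
  nlinarith [hlog, hratio, hx0]

lemma Ganti : StrictAntiOn Gfun (Set.Ici 1) := by
  apply strictAntiOn_of_deriv_neg (convex_Ici 1)
  · intro θ hθ
    exact ((Gderiv (lt_of_lt_of_le one_pos hθ)).continuousAt).continuousWithinAt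
  · intro θ hθ
    rw [interior_Ici] at hθ
    have hθ1 : 1 ≤ θ := le_of_lt hθ
    rw [(Gderiv (lt_of_lt_of_le one_pos hθ1)).deriv]
    exact Gderiv_neg hθ1

lemma log_val {θ : ℝ} (hθ : 1 ≤ θ) :
    Real.log ((Real.exp (-2) ^ (1 / θ) + Real.exp (-2) ^ (-(1 / θ)) - 2) ^ θ) = Gfun θ := by
  have hθ0 : 0 < θ := lt_of_lt_of_le one_pos hθ
  have h1 : Real.exp (-2 : ℝ) ^ (1 / θ) = Real.exp (-2 / θ) := by
    rw [Real.rpow_def_of_pos (Real.exp_pos _), Real.log_exp]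
    ring_nf
  have h2 : Real.exp (-2 : ℝ) ^ (-(1 / θ)) = Real.exp (2 / θ) := by
    rw [Real.rpow_def_of_pos (Real.exp_pos _), Real.log_exp]
    ring_nf
  have hsq : Real.exp (-2 / θ) + Real.exp (2 / θ) - 2
      = (Real.exp θ⁻¹ - Real.exp (-θ⁻¹)) ^ 2 := by
    have e1 : Real.exp θ⁻¹ * Real.exp θ⁻¹ = Real.exp (2 / θ) := by
      rw [← Real.exp_add]; ring_nf
    have e2 : Real.exp (-θ⁻¹) * Real.exp (-θ⁻¹) = Real.exp (-2 / θ) := by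
      rw [← Real.exp_add]; ring_nf
    have e3 : Real.exp θ⁻¹ * Real.exp (-θ⁻¹) = 1 := by
      rw [← Real.exp_add]; simp
    nlinarith [e1, e2, e3]
  have hEpos : 0 < Real.exp θ⁻¹ - Real.exp (-θ⁻¹) := E_pos (inv_pos.mpr hθ0)
  have hgpos : 0 < Real.exp (-2 / θ) + Real.exp (2 / θ) - 2 := by
    rw [hsq]; positivity
  rw [h1, h2, Real.log_rpow hgpos, hsq, Real.log_pow]
  unfold Gfun
  push_cast
  ring

/-- Identifiability of the A1 copula: if the A1 generators with parameters
`θ₁, θ₂ ≥ 1` agree on all of `(0,1)`, then `θ₁ = θ₂`. -/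
theorem stmt_13 (θ₁ θ₂ : ℝ) (h₁ : 1 ≤ θ₁) (h₂ : 1 ≤ θ₂)
    (h : ∀ t ∈ Set.Ioo (0 : ℝ) 1,
      (t ^ (1 / θ₁) + t ^ (-(1 / θ₁)) - 2) ^ θ₁ =
        (t ^ (1 / θ₂) + t ^ (-(1 / θ₂)) - 2) ^ θ₂) :
    θ₁ = θ₂ := by
  have ht : Real.exp (-2 : ℝ) ∈ Set.Ioo (0 : ℝ) 1 := by
    constructor
    · exact Real.exp_pos _
    · have h0 : Real.exp (-2 : ℝ) < Real.exp 0 := Real.exp_lt_exp.mpr (by norm_num)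
      rwa [Real.exp_zero] at h0
  have heq := h _ ht
  have : Gfun θ₁ = Gfun θ₂ := by
    rw [← log_val h₁, ← log_val h₂, heq]
  exact Ganti.injOn h₁ h₂ this
end

section
/- Let θ ≥ 1 and s > 0 be real, and define t = (s^{1/θ} + 2 − √((s^{1/θ} + 2)² − 4))/2. Then t ∈ (0,1) and φ_A2(t;θ) = ((1 − t)²/t)^θ = s; i.e., the corrected inverse generator formula for A2 is a right inverse of φ_A2(·;θ) on (0, ∞). -/
/-- The A2 generator `φ_A2(t;θ) = ((1 − t)²/t)^θ` (real power). -/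
noncomputable def phiA2 (θ t : ℝ) : ℝ := ((1 - t) ^ 2 / t) ^ θ

/-- For `θ ≥ 1` and `s > 0`, the corrected A2 inverse-generator formula
`t = (s^{1/θ} + 2 − √((s^{1/θ} + 2)² − 4))/2` satisfies `t ∈ (0,1)` and
`φ_A2(t;θ) = s`. -/
theorem stmt_18 (θ s : ℝ) (hθ : 1 ≤ θ) (hs : 0 < s)
    (t : ℝ)
    (htdef : t = (s ^ (1 / θ) + 2 - Real.sqrt ((s ^ (1 / θ) + 2) ^ 2 - 4)) / 2) :
    t ∈ Set.Ioo (0 : ℝ) 1 ∧ phiA2 θ t = s := by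
  set u := s ^ (1 / θ) with hu
  have hu0 : 0 < u := Real.rpow_pos_of_pos hs _
  set a := u + 2 with ha
  have ha2 : 2 < a := by linarith
  have hd : 0 ≤ a ^ 2 - 4 := by nlinarith
  set r := Real.sqrt (a ^ 2 - 4) with hr
  have hr0 : 0 ≤ r := Real.sqrt_nonneg _
  have hr2 : r ^ 2 = a ^ 2 - 4 := Real.sq_sqrt hd
  have hra : r < a := by
    nlinarith [Real.sq_sqrt hd]
  have hra2 : a - 2 < r := by
    have h1 : (a - 2) ^ 2 < r ^ 2 := by nlinarith
    nlinarith
  have ht0 : 0 < t := by rw [htdef]; linarith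
  have ht1 : t < 1 := by rw [htdef]; linarith
  have htq : t ^ 2 = a * t - 1 := by
    rw [htdef]; ring_nf; nlinarith
  have hkey : (1 - t) ^ 2 / t = u := by
    field_simp
    nlinarith
  refine ⟨⟨ht0, ht1⟩, ?_⟩
  have hθ0 : θ ≠ 0 := by linarith
  rw [phiA2, hkey, hu, ← Real.rpow_mul hs.le, one_div_mul_cancel hθ0, Real.rpow_one]
end
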